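/- For all indices j, l₁, l₂, l₃ ∈ {0, 1, …, m}, at every point of U one has the cross-differentiation identity: ∂_{y^{l₃}}( □^j_{y^{l₁}y^{l₂}} ) − ∂_{y^{l₂}}( □^j_{y^{l₁}y^{l₃}} ) = −Σ_{k=0}^m □^k_{y^{l₁}y^{l₂}} · □^j_{y^{l₃}y^{k}} + Σ_{k=0}^m □^k_{y^{l₁}y^{l₃}} · □^j_{y^{l₂}y^{k}}. -/

import Mathlib

open Filter Topology

/-- Partial derivative in the direction of the `i`-th coordinate `y^i`
(with the convention `y⁰ ≡ x`) of a function on `ℝ^{1+m}`. -/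
noncomputable def pd (m : ℕ) (i : Fin (m + 1)) (f : (Fin (m + 1) → ℝ) → ℝ) :
    (Fin (m + 1) → ℝ) → ℝ :=
  fun z => fderiv ℝ f z (Pi.single i 1)

/-- The Jacobian determinant `Δ(x|y¹|⋯|y^m)` of the family `Z = (X, Y¹, …, Y^m)`. -/
noncomputable def jacDet (m : ℕ) (Z : Fin (m + 1) → (Fin (m + 1) → ℝ) → ℝ)
    (z : Fin (m + 1) → ℝ) : ℝ :=
  (Matrix.of fun i j => pd m j (Z i) z).det

/-- The modified determinant `Δ(x|⋯|^k y^{l₁}y^{l₂}|⋯|y^m)`, obtained from the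
Jacobian determinant by replacing its `k`-th column by the column of second-order
derivatives `∂_{y^{l₁}}∂_{y^{l₂}}`. -/
noncomputable def jacDetRep (m : ℕ) (Z : Fin (m + 1) → (Fin (m + 1) → ℝ) → ℝ)
    (k l₁ l₂ : Fin (m + 1)) (z : Fin (m + 1) → ℝ) : ℝ :=
  (Matrix.of fun i j =>
    if j = k then pd m l₂ (pd m l₁ (Z i)) z else pd m j (Z i) z).det

/-- The square functions `□^k_{y^{l₁}y^{l₂}} = Δ(x|⋯|^k y^{l₁}y^{l₂}|⋯|y^m) / Δ(x|y¹|⋯|y^m)`. -/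
noncomputable def sqFn (m : ℕ) (Z : Fin (m + 1) → (Fin (m + 1) → ℝ) → ℝ)
    (k l₁ l₂ : Fin (m + 1)) (z : Fin (m + 1) → ℝ) : ℝ :=
  jacDetRep m Z k l₁ l₂ z / jacDet m Z z

private lemma pd_contDiffOn {m : ℕ} {n : WithTop ℕ∞} {f : (Fin (m+1) → ℝ) → ℝ}
    {U : Set (Fin (m+1) → ℝ)} (hU : IsOpen U) (hf : ContDiffOn ℝ (n+1) f U) (i : Fin (m+1)) :
    ContDiffOn ℝ n (pd m i f) U := by
  have h1 : ContDiffOn ℝ n (fderiv ℝ f) U := hf.fderiv_of_isOpen hU le_rfl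
  exact h1.clm_apply contDiffOn_const

private lemma pd_pd_eq {m : ℕ} (f : (Fin (m+1) → ℝ) → ℝ) {z : Fin (m+1) → ℝ}
    (h : DifferentiableAt ℝ (fderiv ℝ f) z) (a b : Fin (m+1)) :
    pd m b (pd m a f) z = fderiv ℝ (fderiv ℝ f) z (Pi.single b 1) (Pi.single a 1) := by
  have hcomp : pd m b (pd m a f) z
      = fderiv ℝ ((ContinuousLinearMap.apply ℝ ℝ (Pi.single a (1:ℝ))) ∘ (fderiv ℝ f)) z
          (Pi.single b 1) := rfl
  rw [hcomp, fderiv_comp z (ContinuousLinearMap.differentiableAt _) h]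
  simp

private lemma pd_symm {m : ℕ} {f : (Fin (m+1) → ℝ) → ℝ} {z : Fin (m+1) → ℝ}
    (hf : ContDiffAt ℝ 2 f z) (a b : Fin (m+1)) :
    pd m b (pd m a f) z = pd m a (pd m b f) z := by
  have hd : DifferentiableAt ℝ (fderiv ℝ f) z :=
    (hf.fderiv_right (m := 1) (by norm_num)).differentiableAt (by norm_num)
  rw [pd_pd_eq f hd, pd_pd_eq f hd]
  exact (hf.isSymmSndFDerivAt (by simp [minSmoothness_of_isRCLikeNormedField])) _ _

private lemma differentiableAt_finset_prod {E : Type*} [NormedAddCommGroup E] [NormedSpace ℝ E]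
    {ι : Type*} {u : Finset ι} {f : ι → E → ℝ} {x : E}
    (h : ∀ i ∈ u, DifferentiableAt ℝ (f i) x) :
    DifferentiableAt ℝ (fun y => ∏ i ∈ u, f i y) x := by
  classical
  induction u using Finset.induction with
  | empty => simp [differentiableAt_const]
  | insert _ _ hni ih =>
      simp only [Finset.prod_insert hni]
      exact (h _ (Finset.mem_insert_self _ _)).mul
        (ih fun i hi => h i (Finset.mem_insert_of_mem hi))

private lemma differentiableAt_det {n : ℕ} {E : Type*} [NormedAddCommGroup E] [NormedSpace ℝ E]
    {M : E → Matrix (Fin n) (Fin n) ℝ} {x : E}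
    (h : ∀ i j, DifferentiableAt ℝ (fun z => M z i j) x) :
    DifferentiableAt ℝ (fun z => (M z).det) x := by
  simp only [Matrix.det_apply]
  apply DifferentiableAt.fun_sum
  intro σ _
  simp only [Units.smul_def, zsmul_eq_mul]
  exact DifferentiableAt.const_mul (differentiableAt_finset_prod fun i _ => h (σ i) i) _

private lemma mulVec_sqFn {m : ℕ} {Z : Fin (m + 1) → (Fin (m + 1) → ℝ) → ℝ}
    {z : Fin (m+1) → ℝ} (hz : jacDet m Z z ≠ 0) (l₁ l₂ i : Fin (m+1)) :
    ∑ k, pd m k (Z i) z * sqFn m Z k l₁ l₂ z = pd m l₂ (pd m l₁ (Z i)) z := by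
  set A : Matrix (Fin (m+1)) (Fin (m+1)) ℝ := Matrix.of fun i j => pd m j (Z i) z with hA
  set b : Fin (m+1) → ℝ := fun i => pd m l₂ (pd m l₁ (Z i)) z with hb
  have hrep : ∀ k, jacDetRep m Z k l₁ l₂ z = Matrix.cramer A b k := by
    intro k
    rw [Matrix.cramer_apply, jacDetRep]
    congr 1
    ext i j
    by_cases h : j = k <;> simp [Matrix.updateCol_apply, h, hA, hb]
  have hm := congrFun (Matrix.mulVec_cramer A b) i
  simp only [Matrix.mulVec, dotProduct, Pi.smul_apply, smul_eq_mul] at hm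
  have hdet : A.det = jacDet m Z z := rfl
  calc ∑ k, pd m k (Z i) z * sqFn m Z k l₁ l₂ z
      = (∑ k, A i k * Matrix.cramer A b k) / jacDet m Z z := by
        rw [Finset.sum_div]
        refine Finset.sum_congr rfl fun k _ => ?_
        rw [sqFn, hrep k, mul_div_assoc]
        rfl
    _ = b i := by rw [hm, hdet]; field_simp

/-- Cross-differentiation identities for the square functions of a family
`Z = (X, Y¹, …, Y^m)` of C³ functions on an open set of `ℝ^{1+m}` with
nonvanishing Jacobian determinant. -/
theorem square_fn_cross_differentiation_general (m : ℕ) (hm : 1 ≤ m)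
    (U : Set (Fin (m + 1) → ℝ)) (hU : IsOpen U)
    (Z : Fin (m + 1) → (Fin (m + 1) → ℝ) → ℝ)
    (hZ : ∀ i, ContDiffOn ℝ 3 (Z i) U)
    (hJ : ∀ z ∈ U, jacDet m Z z ≠ 0) :
    ∀ (j l₁ l₂ l₃ : Fin (m + 1)), ∀ z ∈ U,
      pd m l₃ (sqFn m Z j l₁ l₂) z - pd m l₂ (sqFn m Z j l₁ l₃) z =
        -(∑ k : Fin (m + 1), sqFn m Z k l₁ l₂ z * sqFn m Z j l₃ k z) +
          ∑ k : Fin (m + 1), sqFn m Z k l₁ l₃ z * sqFn m Z j l₂ k z := by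
  intro j l₁ l₂ l₃ z hz
  classical
  have hUz : U ∈ 𝓝 z := hU.mem_nhds hz
  have h21 : (2:WithTop ℕ∞) + 1 = 3 := by norm_num
  have h11 : (1:WithTop ℕ∞) + 1 = 2 := by norm_num
  have hZ2 : ∀ i, ContDiffOn ℝ ((2:WithTop ℕ∞)+1) (Z i) U := fun i => by rw [h21]; exact hZ i
  have hpd1 : ∀ (a : Fin (m+1)) i, ContDiffOn ℝ 2 (pd m a (Z i)) U :=
    fun a i => pd_contDiffOn hU (hZ2 i) a
  have hpd1' : ∀ (a : Fin (m+1)) i, ContDiffOn ℝ ((1:WithTop ℕ∞)+1) (pd m a (Z i)) U :=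
    fun a i => by rw [h11]; exact hpd1 a i
  have hpd2 : ∀ (a b : Fin (m+1)) i, ContDiffOn ℝ 1 (pd m b (pd m a (Z i))) U :=
    fun a b i => pd_contDiffOn hU (hpd1' a i) b
  have hDpd1 : ∀ (a : Fin (m+1)) i, ∀ w ∈ U, DifferentiableAt ℝ (pd m a (Z i)) w :=
    fun a i w hw => ((hpd1 a i).contDiffAt (hU.mem_nhds hw)).differentiableAt (by norm_num)
  have hDpd2 : ∀ (a b : Fin (m+1)) i, ∀ w ∈ U,
      DifferentiableAt ℝ (pd m b (pd m a (Z i))) w :=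
    fun a b i w hw => ((hpd2 a b i).contDiffAt (hU.mem_nhds hw)).differentiableAt (by norm_num)
  have hDdet : ∀ w ∈ U, DifferentiableAt ℝ (jacDet m Z) w := by
    intro w hw
    exact differentiableAt_det (fun i jj => hDpd1 jj i w hw)
  have hDrep : ∀ (k a b : Fin (m+1)), ∀ w ∈ U, DifferentiableAt ℝ (jacDetRep m Z k a b) w := by
    intro k a b w hw
    apply differentiableAt_det
    intro i jj
    by_cases hjk : jj = k
    · simpa [Matrix.of_apply, hjk] using hDpd2 a b i w hw
    · simpa [Matrix.of_apply, hjk] using hDpd1 jj i w hw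
  have hDsq : ∀ (k a b : Fin (m+1)), ∀ w ∈ U, DifferentiableAt ℝ (sqFn m Z k a b) w := by
    intro k a b w hw
    have h' : DifferentiableAt ℝ (fun y => jacDetRep m Z k a b y * (jacDet m Z y)⁻¹) w :=
      (hDrep k a b w hw).mul ((hDdet w hw).inv (hJ w hw))
    have h'' : DifferentiableAt ℝ (fun y => jacDetRep m Z k a b y / jacDet m Z y) w := by
      simpa only [div_eq_mul_inv] using h'
    exact h''
  have hCD2Z : ∀ i, ∀ w ∈ U, ContDiffAt ℝ 2 (Z i) w :=
    fun i w hw => ((hZ i).contDiffAt (hU.mem_nhds hw)).of_le (by norm_num)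
  have hsymmZ : ∀ (a b : Fin (m+1)) i, ∀ w ∈ U,
      pd m b (pd m a (Z i)) w = pd m a (pd m b (Z i)) w :=
    fun a b i w hw => pd_symm (hCD2Z i w hw) a b
  have hsqsymm : ∀ (k a b : Fin (m+1)), ∀ w ∈ U, sqFn m Z k a b w = sqFn m Z k b a w := by
    intro k a b w hw
    have hM : (Matrix.of fun i jj =>
          if jj = k then pd m b (pd m a (Z i)) w else pd m jj (Z i) w)
        = (Matrix.of fun i jj =>
          if jj = k then pd m a (pd m b (Z i)) w else pd m jj (Z i) w) := by
      ext i jj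
      by_cases hjk : jj = k <;> simp [hjk, hsymmZ a b i w hw]
    unfold sqFn jacDetRep
    rw [hM]
  -- the key differentiated identity
  have key : ∀ (a b c : Fin (m+1)) i,
      ∑ p, pd m p (Z i) z *
        (pd m c (sqFn m Z p a b) z + ∑ k, sqFn m Z k a b z * sqFn m Z p k c z)
      = pd m c (pd m b (pd m a (Z i))) z := by
    intro a b c i
    have hev : (fun w => ∑ k, pd m k (Z i) w * sqFn m Z k a b w)
        =ᶠ[𝓝 z] (pd m b (pd m a (Z i))) :=
      Filter.eventuallyEq_of_mem hUz (fun w hw => mulVec_sqFn (hJ w hw) a b i)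
    have hfd : fderiv ℝ (fun w => ∑ k, pd m k (Z i) w * sqFn m Z k a b w) z
        = fderiv ℝ (pd m b (pd m a (Z i))) z := hev.fderiv_eq
    have hT : pd m c (pd m b (pd m a (Z i))) z
        = fderiv ℝ (fun w => ∑ k, pd m k (Z i) w * sqFn m Z k a b w) z (Pi.single c 1) := by
      rw [hfd]; rfl
    have hsum : fderiv ℝ (fun w => ∑ k, pd m k (Z i) w * sqFn m Z k a b w) z
        = ∑ k, fderiv ℝ (fun w => pd m k (Z i) w * sqFn m Z k a b w) z :=
      fderiv_fun_sum (fun k _ => ((hDpd1 k i z hz).mul (hDsq k a b z hz)))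
    have hterm : ∀ k : Fin (m+1),
        fderiv ℝ (fun w => pd m k (Z i) w * sqFn m Z k a b w) z (Pi.single c 1)
        = pd m k (Z i) z * pd m c (sqFn m Z k a b) z
          + sqFn m Z k a b z * pd m c (pd m k (Z i)) z := by
      intro k
      rw [fderiv_fun_mul (hDpd1 k i z hz) (hDsq k a b z hz)]
      simp only [ContinuousLinearMap.add_apply, ContinuousLinearMap.coe_smul',
        Pi.smul_apply, smul_eq_mul]
      rfl
    rw [hT, hsum, ContinuousLinearMap.sum_apply]
    have hexp : ∀ k : Fin (m+1),
        fderiv ℝ (fun w => pd m k (Z i) w * sqFn m Z k a b w) z (Pi.single c 1)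
        = pd m k (Z i) z * pd m c (sqFn m Z k a b) z
          + sqFn m Z k a b z * ∑ p, pd m p (Z i) z * sqFn m Z p k c z := by
      intro k
      rw [hterm k, ← mulVec_sqFn (hJ z hz) k c i]
    rw [Finset.sum_congr rfl (fun k _ => hexp k)]
    simp only [mul_add, Finset.sum_add_distrib]
    congr 1
    simp only [Finset.mul_sum]
    rw [Finset.sum_comm]
    refine Finset.sum_congr rfl fun k _ => Finset.sum_congr rfl fun p _ => by ring
  -- symmetry of third derivatives
  have hTsym : ∀ i, pd m l₃ (pd m l₂ (pd m l₁ (Z i))) z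
      = pd m l₂ (pd m l₃ (pd m l₁ (Z i))) z :=
    fun i => pd_symm ((hpd1 l₁ i).contDiffAt hUz) l₂ l₃
  -- the vector that must vanish
  set V : Fin (m+1) → ℝ := fun p =>
    (pd m l₃ (sqFn m Z p l₁ l₂) z + ∑ k, sqFn m Z k l₁ l₂ z * sqFn m Z p k l₃ z)
    - (pd m l₂ (sqFn m Z p l₁ l₃) z + ∑ k, sqFn m Z k l₁ l₃ z * sqFn m Z p k l₂ z) with hV
  have hAV : ∀ i, ∑ p, pd m p (Z i) z * V p = 0 := by
    intro i
    simp only [hV, mul_sub]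
    rw [Finset.sum_sub_distrib, key l₁ l₂ l₃ i, key l₁ l₃ l₂ i, hTsym i, sub_self]
  set A : Matrix (Fin (m+1)) (Fin (m+1)) ℝ := Matrix.of fun i p => pd m p (Z i) z with hA
  have hAV' : A.mulVec V = 0 := by
    funext i
    simpa [Matrix.mulVec, dotProduct, hA] using hAV i
  have hunit : IsUnit A.det := isUnit_iff_ne_zero.mpr (hJ z hz)
  have hV0 : V = 0 := by
    have h1 := congrArg (fun w => A⁻¹.mulVec w) hAV'
    simpa [Matrix.mulVec_mulVec, Matrix.nonsing_inv_mul A hunit, Matrix.one_mulVec] using h1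
  have hVj := congrFun hV0 j
  simp only [hV, Pi.zero_apply] at hVj
  have hs3 : ∑ k, sqFn m Z k l₁ l₂ z * sqFn m Z j k l₃ z
      = ∑ k, sqFn m Z k l₁ l₂ z * sqFn m Z j l₃ k z :=
    Finset.sum_congr rfl fun k _ => by rw [hsqsymm j k l₃ z hz]
  have hs2 : ∑ k, sqFn m Z k l₁ l₃ z * sqFn m Z j k l₂ z
      = ∑ k, sqFn m Z k l₁ l₃ z * sqFn m Z j l₂ k z :=
    Finset.sum_congr rfl fun k _ => by rw [hsqsymm j k l₂ z hz]
  rw [hs3, hs2] at hVj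
  linarith
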